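/- If G and H are polynomials over a finite field F_q, the composition G∘H is an odd polynomial (all terms have odd degree), and the degree of G is coprime to q (the characteristic does not divide deg G, and deg G ≥ 1), then H(x) - H(0) is an odd polynomial. -/

import Mathlib

open Polynomial Finset

/-- reverse of a power in a domain -/
private lemma rev_pow {F : Type*} [Field F] (p : Polynomial F) (n : ℕ) :
    (p ^ n).reverse = p.reverse ^ n := by
  induction n with
  | zero => simp [Polynomial.reverse, Polynomial.reflect_one]
  | succ m ih => rw [pow_succ, reverse_mul_of_domain, ih, pow_succ]

/-- Key combinatorial lemma: if all odd coefficients below `k` vanish (k odd), then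
the coefficient of `p^m` at `k` is `m * (p.coeff 0)^(m-1) * p.coeff k`, and
odd coefficients of `p^m` below `k` vanish. -/
private lemma key_pow {F : Type*} [Field F] (p : Polynomial F) (k : ℕ) (hk : Odd k)
    (hz : ∀ j, Odd j → j < k → p.coeff j = 0) :
    ∀ m : ℕ, (∀ i, Odd i → i < k → (p ^ m).coeff i = 0) ∧
      (p ^ m).coeff k = (m : F) * (p.coeff 0) ^ (m - 1) * p.coeff k := by
  intro m
  induction m with
  | zero =>
    constructor
    · intro i hi _
      have : i ≠ 0 := by rintro rfl; exact (Nat.not_odd_iff_even.2 Even.zero) hi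
      simp [coeff_one, this]
    · have : k ≠ 0 := by rintro rfl; exact (Nat.not_odd_iff_even.2 Even.zero) hk
      simp [coeff_one, this]
  | succ m ih =>
    have hpm0 : (p ^ m).coeff 0 = (p.coeff 0) ^ m := by
      simp [coeff_zero_eq_eval_zero, eval_pow]
    constructor
    · intro i hi hik
      rw [pow_succ, mul_comm, coeff_mul]
      apply Finset.sum_eq_zero
      rintro ⟨a, b⟩ hab
      rw [Finset.HasAntidiagonal.mem_antidiagonal] at hab
      rcases Nat.even_or_odd a with ha | ha
      · have hb : Odd b := by
          rcases Nat.even_or_odd b with hb | hb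
          · exact absurd (hab ▸ (ha.add hb)) (Nat.not_even_iff_odd.2 hi)
          · exact hb
        have : b < k := lt_of_le_of_lt (by omega) hik
        rw [(ih.1 b hb this)]; ring
      · have : a < k := lt_of_le_of_lt (by omega) hik
        rw [hz a ha this]; ring
    · rw [pow_succ, mul_comm, coeff_mul, Finset.Nat.sum_antidiagonal_eq_sum_range_succ_mk]
      have hk0 : k ≠ 0 := by rintro rfl; exact (Nat.not_odd_iff_even.2 Even.zero) hk
      have hsub : ({0, k} : Finset ℕ) ⊆ Finset.range (k + 1) := by
        intro i hi
        simp only [Finset.mem_insert, Finset.mem_singleton] at hi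
        rcases hi with rfl | rfl <;> simp
      rw [← Finset.sum_subset hsub]
      · rw [Finset.sum_pair (by omega : (0:ℕ) ≠ k)]
        simp only [Nat.sub_zero, Nat.sub_self]
        rw [ih.2, hpm0]
        cases m with
        | zero => simp
        | succ m' =>
          simp only [Nat.add_sub_cancel]
          push_cast
          ring
      · rintro i hir hin
        simp only [Finset.mem_insert, Finset.mem_singleton, not_or] at hin
        obtain ⟨hi0, hik⟩ := hin
        have hik' : i ≤ k := by
          simpa using Nat.lt_succ_iff.mp (Finset.mem_range.mp hir)
        rcases Nat.even_or_odd i with he | ho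
        · have hbodd : Odd (k - i) := Nat.Odd.sub_even hik' hk he
          have : k - i < k := by omega
          rw [ih.1 (k - i) hbodd this]; ring
        · have : i < k := lt_of_le_of_ne hik' hik
          rw [hz i ho this]; ring

/-- If `G ∘ H` is an odd polynomial over the finite field `F` with `q` elements,
and `deg G` is coprime to `q` (with `deg G ≥ 1`), then `H(x) - H(0)` is odd. -/
theorem stmt_0 (q : ℕ) (F : Type*) [Field F] [Fintype F] (hq : Fintype.card F = q)
    (G H : Polynomial F)
    (hodd : ∀ n : ℕ, Even n → (G.comp H).coeff n = 0)
    (hcop : Nat.Coprime G.natDegree q) (hdeg : 1 ≤ G.natDegree) :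
    ∀ n : ℕ, Even n → (H - Polynomial.C (H.coeff 0)).coeff n = 0 := by
  intro m hm
  set n := G.natDegree with hn
  set d := H.natDegree with hd
  rcases Nat.eq_zero_or_pos m with rfl | hmpos
  · simp
  have hmne : m ≠ 0 := Nat.pos_iff_ne_zero.mp hmpos
  rw [coeff_sub, coeff_C, if_neg hmne, sub_zero]
  -- if m exceeds the degree we are done
  rcases lt_or_ge d m with hdm | hmd
  · exact coeff_eq_zero_of_natDegree_lt hdm
  -- now 1 ≤ m ≤ d, so d ≥ 1
  have hd1 : 1 ≤ d := le_trans hmpos hmd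
  have hH0 : H ≠ 0 := fun h => by simp [hd, h] at hd1
  have hG0 : G ≠ 0 := fun h => by simp [hn, h] at hdeg
  -- the characteristic does not divide n
  have hnF : (n : F) ≠ 0 := by
    obtain ⟨p, hpi⟩ := CharP.exists F
    have hp : p.Prime := CharP.char_is_prime F p
    obtain ⟨s, _, hcard⟩ := FiniteField.card F p
    intro h
    have hpn : p ∣ n := (CharP.cast_eq_zero_iff F p n).mp h
    have hpq : p ∣ q := by
      rw [← hq, hcard]; exact dvd_pow_self p s.ne_zero
    have h1 : p ∣ Nat.gcd n q := Nat.dvd_gcd hpn hpq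
    rw [Nat.Coprime.gcd_eq_one hcop] at h1
    exact hp.one_lt.ne' (Nat.dvd_one.mp h1)
  -- n * d is odd
  have hcomp_deg : (G.comp H).natDegree = n * d := natDegree_comp
  have hlead : (G.comp H).coeff (n * d) ≠ 0 := by
    have h1 : (G.comp H).leadingCoeff = G.leadingCoeff * H.leadingCoeff ^ n :=
      leadingCoeff_comp (by omega)
    have : (G.comp H).leadingCoeff ≠ 0 := by
      rw [h1]
      exact mul_ne_zero (leadingCoeff_ne_zero.mpr hG0)
        (pow_ne_zero _ (leadingCoeff_ne_zero.mpr hH0))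
    rwa [Polynomial.leadingCoeff, hcomp_deg] at this
  have hodd_nd : Odd (n * d) := by
    rcases Nat.even_or_odd (n * d) with he | ho
    · exact absurd (hodd _ he) hlead
    · exact ho
  obtain ⟨hodd_n, hodd_d⟩ := Nat.odd_mul.mp hodd_nd
  -- the key claim, by strong induction
  have Key : ∀ k, Odd k → k < d → H.coeff (d - k) = 0 := by
    intro k
    induction k using Nat.strong_induction_on with
    | _ k IH =>
      intro hkodd hkd
      set p := H.reverse with hp
      have hrev : ∀ j, j ≤ d → p.coeff j = H.coeff (d - j) := fun j hj => by
        rw [hp, coeff_reverse, revAt_le hj]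
      have hz : ∀ j, Odd j → j < k → p.coeff j = 0 := fun j hj hjk => by
        rw [hrev j (by omega)]
        exact IH j hjk hj (by omega)
      have hKP := (key_pow p k hkodd hz n).2
      -- transfer to H^n
      have hnd_pow : (H ^ n).natDegree = n * d := by rw [natDegree_pow]
      have hknd : k ≤ n * d := le_trans hkd.le (Nat.le_mul_of_pos_left d (by omega))
      have htrans : (H ^ n).coeff (n * d - k) = (p ^ n).coeff k := by
        rw [hp, ← rev_pow, coeff_reverse, hnd_pow, revAt_le hknd]
      -- coefficient of the composition
      have hw : (n - 1) * d < n * d - k := by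
        have h1 : (n - 1) * d = n * d - d := by rw [Nat.sub_one_mul]
        have h2 : d ≤ n * d := Nat.le_mul_of_pos_left d (by omega)
        omega
      have hcompc : (G.comp H).coeff (n * d - k) = G.coeff n * (H ^ n).coeff (n * d - k) := by
        rw [comp_eq_sum_left, Polynomial.sum, finset_sum_coeff]
        rw [Finset.sum_eq_single n]
        · rw [coeff_C_mul]
        · intro i hi hine
          apply coeff_eq_zero_of_natDegree_lt
          have hiled : i ≤ n := le_natDegree_of_mem_supp i hi
          have : (C (G.coeff i) * H ^ i).natDegree ≤ i * d := by
            refine le_trans (natDegree_C_mul_le _ _) ?_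
            rw [natDegree_pow]
          have hile : i * d ≤ (n - 1) * d := Nat.mul_le_mul_right d (by omega)
          omega
        · intro hnot
          rw [Polynomial.notMem_support_iff] at hnot
          have : G.leadingCoeff = 0 := by rwa [Polynomial.leadingCoeff, ← hn]
          exact absurd this (leadingCoeff_ne_zero.mpr hG0)
      -- the coefficient vanishes since n*d - k is even
      have heven : Even (n * d - k) := Nat.Odd.sub_odd hodd_nd hkodd
      have h0 := hodd _ heven
      rw [hcompc, htrans, hKP] at h0
      have hp0 : p.coeff 0 ≠ 0 := by
        rw [hrev 0 (Nat.zero_le d), Nat.sub_zero, ← Polynomial.leadingCoeff]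
        exact leadingCoeff_ne_zero.mpr hH0
      have hgn : G.coeff n ≠ 0 := by
        rw [hn, ← Polynomial.leadingCoeff]; exact leadingCoeff_ne_zero.mpr hG0
      have := mul_ne_zero hgn (mul_ne_zero hnF (pow_ne_zero (n-1) hp0))
      have hpk : p.coeff k = 0 := by
        by_contra hc
        exact (mul_ne_zero this hc) (by rw [← h0]; ring)
      rwa [hrev k hkd.le] at hpk
  -- finish: m = d - (d - m)
  have hk : Odd (d - m) := Nat.Odd.sub_even hmd hodd_d hm
  have hkd : d - m < d := by omega
  have := Key (d - m) hk hkd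
  rwa [Nat.sub_sub_self hmd] at this
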